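/- Let G be a graph having the F̄ property, i.e., G has three distinct vertices x, y, z, each of degree 2, with N(x) = N(y) = N(z). Then for every integer k ≥ 5 with |V(G)| ≥ k, the graph G does not have the F_k property. -/

import Mathlib

open SimpleGraph

/-- The square of a simple graph: two distinct vertices are adjacent iff their distance
in `G` is at most 2, i.e. they are adjacent in `G` or have a common neighbour. -/
def SimpleGraph.square {V : Type*} (G : SimpleGraph V) : SimpleGraph V :=
  SimpleGraph.fromRel (fun u v => G.Adj u v ∨ ∃ w, G.Adj u w ∧ G.Adj w v)

/-- A graph is 2-connected if it has at least 3 vertices, is connected, and deleting any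
single vertex leaves it connected. -/
def SimpleGraph.TwoConnected {V : Type*} (G : SimpleGraph V) : Prop :=
  3 ≤ Nat.card V ∧ G.Connected ∧ ∀ v : V, (G.induce ({v}ᶜ : Set V)).Connected

/-- In a path, at most one edge is incident to the first endpoint. -/
lemma edge_at_endpoint {V : Type*} {G : SimpleGraph V} {u v : V} (p : G.Walk u v)
    (hp : p.IsPath) {e f : Sym2 V} (he : e ∈ p.edges) (hf : f ∈ p.edges)
    (hue : u ∈ e) (huf : u ∈ f) : e = f := by
  cases p with
  | nil => simp at he
  | @cons _ c _ h q =>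
    rw [SimpleGraph.Walk.cons_isPath_iff] at hp
    have key : ∀ g ∈ q.edges, u ∈ g → False := by
      intro g hg hug
      induction g with
      | h s t =>
        rcases Sym2.mem_iff.mp hug with rfl | rfl
        · exact hp.2 (q.fst_mem_support_of_mem_edges hg)
        · exact hp.2 (q.snd_mem_support_of_mem_edges hg)
    rw [SimpleGraph.Walk.edges_cons, List.mem_cons] at he hf
    rcases he with rfl | he
    · rcases hf with rfl | hf
      · rfl
      · exact absurd (key f hf huf) (by simp)
    · exact absurd (key e he hue) (by simp)

/-- A path cannot contain two distinct edges both incident to one of its endpoints. -/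
lemma two_edges_at_end {V : Type*} {G : SimpleGraph V} {u v c s t : V} (p : G.Walk u v)
    (hp : p.IsPath) (hc : c = u ∨ c = v) (hs : s(s, c) ∈ p.edges) (ht : s(t, c) ∈ p.edges)
    (hne : s(s, c) ≠ s(t, c)) : False := by
  rcases hc with rfl | rfl
  · exact hne (edge_at_endpoint p hp hs ht (by simp) (by simp))
  · refine hne (edge_at_endpoint p.reverse hp.reverse ?_ ?_ (by simp) (by simp)) <;>
      simp [SimpleGraph.Walk.edges_reverse, List.mem_reverse, hs, ht]

/-- If `G` has three distinct 2-valent vertices `x, y, z` with `N(x) = N(y) = N(z)`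
(the F̄ property), then `G` does not have the F_k property for any `k ≥ 5` with
`k ≤ |V(G)|`. -/
theorem Fbar_not_Fk {V : Type*} [DecidableEq V] (G : SimpleGraph V) (x y z : V)
    (hxy : x ≠ y) (hxz : x ≠ z) (hyz : y ≠ z)
    (hdx : (G.neighborSet x).ncard = 2) (hdy : (G.neighborSet y).ncard = 2)
    (hdz : (G.neighborSet z).ncard = 2)
    (hNxy : G.neighborSet x = G.neighborSet y) (hNyz : G.neighborSet y = G.neighborSet z)
    (k : ℕ) (hk : 5 ≤ k) (hcard : k ≤ Nat.card V) :
    ¬ (∀ v : Fin k → V, Function.Injective v →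
        ∃ p : G.square.Walk (v ⟨0, by omega⟩) (v ⟨1, by omega⟩), p.IsHamiltonian ∧
          ∃ w : Fin k → V,
            (∀ i : Fin k, 2 ≤ i.val → G.Adj (v i) (w i) ∧ s(v i, w i) ∈ p.edges) ∧
            (∀ i j : Fin k, 2 ≤ i.val → 2 ≤ j.val → i ≠ j →
              s(v i, w i) ≠ s(v j, w j))) := by
  intro h
  obtain ⟨a, b, hab, hN⟩ := Set.ncard_eq_two.mp hdx
  have hxa : G.Adj x a := by
    have : a ∈ G.neighborSet x := by rw [hN]; simp
    exact this
  have hxb : G.Adj x b := by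
    have : b ∈ G.neighborSet x := by rw [hN]; simp
    exact this
  have hya : G.Adj y a := by have : a ∈ G.neighborSet y := hNxy ▸ hxa; exact this
  have hyb : G.Adj y b := by have : b ∈ G.neighborSet y := hNxy ▸ hxb; exact this
  have hza : G.Adj z a := by have : a ∈ G.neighborSet z := hNyz ▸ hya; exact this
  have hzb : G.Adj z b := by have : b ∈ G.neighborSet z := hNyz ▸ hyb; exact this
  -- finiteness
  have hfin : Finite V := (Nat.card_pos_iff.mp (by omega)).2
  haveI := Fintype.ofFinite V
  have hcard' : k ≤ Fintype.card V := by rwa [Nat.card_eq_fintype_card] at hcard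
  -- the five special vertices
  have hax : a ≠ x := hxa.ne'
  have hay : a ≠ y := hya.ne'
  have haz : a ≠ z := hza.ne'
  have hbx : b ≠ x := hxb.ne'
  have hby : b ≠ y := hyb.ne'
  have hbz : b ≠ z := hzb.ne'
  have hSnodup : ([a, b, x, y, z] : List V).Nodup := by
    simp only [List.nodup_cons, List.mem_cons, List.mem_singleton, List.not_mem_nil,
      List.nodup_nil, or_false, not_or, and_true]
    tauto
  have hScard : ({a, b, x, y, z} : Finset V).card = 5 := by
    rw [show ({a, b, x, y, z} : Finset V) = ([a, b, x, y, z] : List V).toFinset by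
      simp]
    rw [List.toFinset_card_of_nodup hSnodup]
    rfl
  have hcompl : k - 5 ≤ (Finset.univ \ ({a, b, x, y, z} : Finset V)).card := by
    rw [Finset.card_sdiff_of_subset (Finset.subset_univ _), Finset.card_univ, hScard]
    omega
  obtain ⟨T, hTsub, hTcard⟩ :=
    Finset.exists_subset_card_eq (s := Finset.univ \ ({a, b, x, y, z} : Finset V)) (n := k - 5) hcompl
  have hlen : ([a, b, x, y, z] ++ T.toList : List V).length = k := by
    simp [Finset.length_toList, hTcard]
    omega
  have hnodup : ([a, b, x, y, z] ++ T.toList : List V).Nodup := by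
    rw [List.nodup_append]
    refine ⟨hSnodup, T.nodup_toList, ?_⟩
    intro t ht t' htT htt'
    subst htt'
    have h1 : t ∈ Finset.univ \ ({a, b, x, y, z} : Finset V) :=
      hTsub (Finset.mem_toList.mp htT)
    simp only [Finset.mem_sdiff, Finset.mem_insert, Finset.mem_singleton] at h1
    simp only [List.mem_cons, List.mem_singleton, List.not_mem_nil, or_false] at ht
    tauto
  set L : List V := [a, b, x, y, z] ++ T.toList with hL
  have hvdef : ∀ i : Fin k, i.val < L.length := by intro i; rw [hlen]; exact i.isLt
  set v : Fin k → V := fun i => L.get ⟨i.val, hvdef i⟩ with hvd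
  have hv : Function.Injective v := by
    intro i j hij
    have := List.nodup_iff_injective_get.mp hnodup hij
    exact Fin.ext (by simpa using congrArg Fin.val this)
  obtain ⟨p, hham, w, hw, hdist⟩ := h v hv
  have hv0 : v ⟨0, by omega⟩ = a := rfl
  have hv1 : v ⟨1, by omega⟩ = b := rfl
  have hv2 : v ⟨2, by omega⟩ = x := rfl
  have hv3 : v ⟨3, by omega⟩ = y := rfl
  have hv4 : v ⟨4, by omega⟩ = z := rfl
  -- the w's lie in {a, b}
  have hwmem : ∀ (i : Fin k) (hi : 2 ≤ i.val), v i = x ∨ v i = y ∨ v i = z →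
      w i = a ∨ w i = b := by
    intro i hi hvi
    have hadj := (hw i hi).1
    have : w i ∈ G.neighborSet x := by
      rcases hvi with hv' | hv' | hv'
      · rw [hv'] at hadj; exact hadj
      · rw [hNxy]; rw [hv'] at hadj; exact hadj
      · rw [hNxy, hNyz]; rw [hv'] at hadj; exact hadj
    rw [hN] at this
    simpa using this
  have hw2 := hwmem ⟨2, by omega⟩ (by norm_num) (Or.inl hv2)
  have hw3 := hwmem ⟨3, by omega⟩ (by norm_num) (Or.inr (Or.inl hv3))
  have hw4 := hwmem ⟨4, by omega⟩ (by norm_num) (Or.inr (Or.inr hv4))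
  -- two distinct required edges at a single endpoint of the path: contradiction
  have main : ∀ (i j : Fin k), 2 ≤ i.val → 2 ≤ j.val → i ≠ j →
      (w i = a ∨ w i = b) → w i = w j → False := by
    intro i j hi hj hij hwi hwij
    have hei := (hw i hi).2
    have hej := (hw j hj).2
    have hne := hdist i j hi hj hij
    rw [← hwij] at hej hne
    refine two_edges_at_end p hham.isPath ?_ hei hej hne
    rcases hwi with h' | h'
    · exact Or.inl (h'.trans hv0.symm)
    · exact Or.inr (h'.trans hv1.symm)
  have hne23 : (⟨2, by omega⟩ : Fin k) ≠ ⟨3, by omega⟩ := by simp [Fin.ext_iff]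
  have hne24 : (⟨2, by omega⟩ : Fin k) ≠ ⟨4, by omega⟩ := by simp [Fin.ext_iff]
  have hne34 : (⟨3, by omega⟩ : Fin k) ≠ ⟨4, by omega⟩ := by simp [Fin.ext_iff]
  rcases hw2 with h2 | h2 <;> rcases hw3 with h3 | h3 <;> rcases hw4 with h4 | h4
  · exact main _ _ (by norm_num) (by norm_num) hne23 (Or.inl h2) (h2.trans h3.symm)
  · exact main _ _ (by norm_num) (by norm_num) hne23 (Or.inl h2) (h2.trans h3.symm)
  · exact main _ _ (by norm_num) (by norm_num) hne24 (Or.inl h2) (h2.trans h4.symm)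
  · exact main _ _ (by norm_num) (by norm_num) hne34 (Or.inr h3) (h3.trans h4.symm)
  · exact main _ _ (by norm_num) (by norm_num) hne34 (Or.inl h3) (h3.trans h4.symm)
  · exact main _ _ (by norm_num) (by norm_num) hne24 (Or.inr h2) (h2.trans h4.symm)
  · exact main _ _ (by norm_num) (by norm_num) hne23 (Or.inr h2) (h2.trans h3.symm)
  · exact main _ _ (by norm_num) (by norm_num) hne23 (Or.inr h2) (h2.trans h3.symm)
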